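/- Let M be a rank-r elementary split matroid defined by hyperedges H₁,…,H_q with bounds r₁,…,r_q, and suppose R₁, B₁, R₂, B₂ are bases with R₁ ∪ B₁ = R₂ ∪ B₂ (disjoint unions), with R₁, R₂ both H₁-tight and H₃-tight, B₁, B₂ both H₂-tight and H₄-tight, (R₁ ∩ B₂) ∪ (B₁ ∩ R₂) ⊆ (H₁ △ H₃) ∩ (H₂ △ H₄), and |B₁ ∩ R₂ ∩ H₂ ∩ H₃| > 0. Then |((R₁ ∩ R₂) ∪ (B₁ ∩ B₂)) \ (H₁ △ H₃)| ≥ 2. -/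

import Mathlib

open Set symmDiff

variable {α : Type*}

/-- Every base of an elementary split matroid (given by the hyperedge description) has
cardinality `r`. -/
lemma base_ncard_aux (M : Matroid α) [M.Finite] (r q : ℕ) (H : Fin q → Set α) (k : Fin q → ℕ)
    (hHE : ∀ i, H i ⊆ M.E) (hrE : r ≤ M.E.ncard)
    (hsplit : ∀ i j, i ≠ j → (H i ∩ H j).ncard + r ≤ k i + k j)
    (hcover : ∀ i, r ≤ (M.E \ H i).ncard + k i)
    (hindep : ∀ X, M.Indep X ↔ X ⊆ M.E ∧ X.ncard ≤ r ∧ ∀ i, (X ∩ H i).ncard ≤ k i)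
    {B : Set α} (hB : M.IsBase B) : B.ncard = r := by
  have hE : M.E.Finite := M.ground_finite
  obtain ⟨hBE, hBr, hBk⟩ := (hindep B).1 hB.indep
  have hBfin : B.Finite := hE.subset hBE
  refine le_antisymm hBr ?_
  by_contra hlt
  push_neg at hlt
  -- at most one tight hyperedge
  have key : ∀ i j, i ≠ j → k i ≤ (B ∩ H i).ncard → k j ≤ (B ∩ H j).ncard → False := by
    intro i j hij hi hj
    have h1 : ((B ∩ H i) ∪ (B ∩ H j)).ncard + ((B ∩ H i) ∩ (B ∩ H j)).ncard
        = (B ∩ H i).ncard + (B ∩ H j).ncard :=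
      ncard_union_add_ncard_inter _ _ (hBfin.inter_of_left _) (hBfin.inter_of_left _)
    have h2 : ((B ∩ H i) ∪ (B ∩ H j)).ncard ≤ B.ncard :=
      ncard_le_ncard (union_subset inter_subset_left inter_subset_left) hBfin
    have h3 : ((B ∩ H i) ∩ (B ∩ H j)).ncard ≤ (H i ∩ H j).ncard :=
      ncard_le_ncard (fun x hx => ⟨hx.1.2, hx.2.2⟩) (hE.subset (fun x hx => hHE i hx.1))
    have h4 := hsplit i j hij
    omega
  have step : ∃ e, e ∉ B ∧ M.Indep (insert e B) := by
    by_cases htight : ∃ i, k i ≤ (B ∩ H i).ncard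
    · obtain ⟨i, hi⟩ := htight
      have hc := hcover i
      have hsplitB : (B ∩ H i).ncard + (B \ H i).ncard = B.ncard :=
        ncard_inter_add_ncard_diff_eq_ncard B (H i) hBfin
      have hBHi : (B ∩ H i).ncard ≤ k i := hBk i
      have hsubd : B \ H i ⊆ M.E \ H i := fun x hx => ⟨hBE hx.1, hx.2⟩
      have hne : ¬ (M.E \ H i ⊆ B \ H i) := by
        intro hsub
        have := ncard_le_ncard hsub (hBfin.diff)
        omega
      obtain ⟨e, he, heB⟩ := not_subset.mp hne
      have heB' : e ∉ B := fun h => heB ⟨h, he.2⟩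
      refine ⟨e, heB', (hindep _).2 ⟨insert_subset he.1 hBE, ?_, ?_⟩⟩
      · rw [ncard_insert_of_notMem heB' hBfin]; omega
      · intro j
        by_cases hji : j = i
        · subst hji
          have : insert e B ∩ H j = B ∩ H j := by
            ext x
            simp only [mem_inter_iff, mem_insert_iff]
            constructor
            · rintro ⟨(rfl | hx), hxH⟩
              · exact absurd hxH he.2
              · exact ⟨hx, hxH⟩
            · rintro ⟨hx, hxH⟩; exact ⟨Or.inr hx, hxH⟩
          rw [this]; exact hBk j
        · have hjt : (B ∩ H j).ncard < k j := by
            by_contra hcon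
            push_neg at hcon
            exact key j i hji hcon hi
          calc (insert e B ∩ H j).ncard ≤ (insert e (B ∩ H j)).ncard := by
                refine ncard_le_ncard ?_ ((hBfin.inter_of_left _).insert e)
                rintro x ⟨(rfl | hx), hxH⟩
                · exact mem_insert _ _
                · exact Or.inr ⟨hx, hxH⟩
            _ ≤ (B ∩ H j).ncard + 1 := ncard_insert_le _ _
            _ ≤ k j := hjt
    · push_neg at htight
      have hne : ¬ (M.E ⊆ B) := by
        intro hsub
        have := ncard_le_ncard hsub hBfin
        omega
      obtain ⟨e, he, heB⟩ := not_subset.mp hne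
      refine ⟨e, heB, (hindep _).2 ⟨insert_subset he hBE, ?_, ?_⟩⟩
      · rw [ncard_insert_of_notMem heB hBfin]; omega
      · intro j
        have hj := htight j
        calc (insert e B ∩ H j).ncard ≤ (insert e (B ∩ H j)).ncard := by
              refine ncard_le_ncard ?_ ((hBfin.inter_of_left _).insert e)
              rintro x ⟨(rfl | hx), hxH⟩
              · exact mem_insert _ _
              · exact Or.inr ⟨hx, hxH⟩
          _ ≤ (B ∩ H j).ncard + 1 := ncard_insert_le _ _
          _ ≤ k j := hj
  obtain ⟨e, heB, hins⟩ := step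
  have heq := hB.eq_of_subset_indep hins (subset_insert _ _)
  exact heB (by rw [heq]; exact mem_insert _ _)

/-- If a set of size `r` is tight for two distinct hyperedges, it contains their intersection
and is contained in their union. -/
lemma tight_pair_aux {F Hi Hj : Set α} {r ki kj : ℕ} (hFfin : F.Finite)
    (hij_fin : (Hi ∩ Hj).Finite)
    (hF : F.ncard = r) (hi : (F ∩ Hi).ncard = ki) (hj : (F ∩ Hj).ncard = kj)
    (hsp : (Hi ∩ Hj).ncard + r ≤ ki + kj) :
    Hi ∩ Hj ⊆ F ∧ F ⊆ Hi ∪ Hj := by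
  have h1 : ((F ∩ Hi) ∪ (F ∩ Hj)).ncard + ((F ∩ Hi) ∩ (F ∩ Hj)).ncard = ki + kj := by
    rw [ncard_union_add_ncard_inter _ _ (hFfin.inter_of_left _) (hFfin.inter_of_left _), hi, hj]
  have hU : (F ∩ Hi) ∪ (F ∩ Hj) = F ∩ (Hi ∪ Hj) := (inter_union_distrib_left F Hi Hj).symm
  have hI : (F ∩ Hi) ∩ (F ∩ Hj) = F ∩ (Hi ∩ Hj) := by
    ext x; simp only [mem_inter_iff]; tauto
  rw [hU, hI] at h1
  have h2 : (F ∩ (Hi ∪ Hj)).ncard ≤ r := hF ▸ ncard_le_ncard inter_subset_left hFfin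
  have h3 : (F ∩ (Hi ∩ Hj)).ncard ≤ (Hi ∩ Hj).ncard :=
    ncard_le_ncard inter_subset_right hij_fin
  have hsub1 : F ∩ (Hi ∩ Hj) = Hi ∩ Hj :=
    eq_of_subset_of_ncard_le inter_subset_right (by omega) hij_fin
  have h1' : (F ∩ (Hi ∪ Hj)).ncard + (Hi ∩ Hj).ncard = ki + kj := by rw [← h1, hsub1]
  have hsub2 : F ∩ (Hi ∪ Hj) = F :=
    eq_of_subset_of_ncard_le inter_subset_left (by omega) hFfin
  constructor
  · intro x hx
    have : x ∈ F ∩ (Hi ∩ Hj) := hsub1.symm ▸ hx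
    exact this.1
  · intro x hx
    have : x ∈ F ∩ (Hi ∪ Hj) := hsub2.symm ▸ hx
    exact this.2

set_option maxHeartbeats 2000000 in
/-- In a rank-`r` elementary split matroid given by hyperedges `H i` with bounds `k i`,
suppose `R₁, B₁, R₂, B₂` are bases with `R₁ ∪ B₁ = R₂ ∪ B₂` (disjoint unions), `R₁, R₂`
both `H i₁`- and `H i₃`-tight, `B₁, B₂` both `H i₂`- and `H i₄`-tight,
`(R₁ ∩ B₂) ∪ (B₁ ∩ R₂) ⊆ (H i₁ ∆ H i₃) ∩ (H i₂ ∆ H i₄)` and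
`B₁ ∩ R₂ ∩ H i₂ ∩ H i₃ ≠ ∅`. Then `|((R₁ ∩ R₂) ∪ (B₁ ∩ B₂)) \ (H i₁ ∆ H i₃)| ≥ 2`. -/
theorem stmt7 (M : Matroid α) [M.Finite] (r q : ℕ) (H : Fin q → Set α) (k : Fin q → ℕ)
    (hHE : ∀ i, H i ⊆ M.E) (hrE : r ≤ M.E.ncard)
    (hsplit : ∀ i j, i ≠ j → (H i ∩ H j).ncard + r ≤ k i + k j)
    (hcover : ∀ i, r ≤ (M.E \ H i).ncard + k i)
    (hindep : ∀ X, M.Indep X ↔ X ⊆ M.E ∧ X.ncard ≤ r ∧ ∀ i, (X ∩ H i).ncard ≤ k i)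
    (i₁ i₂ i₃ i₄ : Fin q)
    (hdist : i₁ ≠ i₂ ∧ i₁ ≠ i₃ ∧ i₁ ≠ i₄ ∧ i₂ ≠ i₃ ∧ i₂ ≠ i₄ ∧ i₃ ≠ i₄)
    (R₁ B₁ R₂ B₂ : Set α)
    (hR₁ : M.IsBase R₁) (hB₁ : M.IsBase B₁) (hd₁ : Disjoint R₁ B₁)
    (hR₂ : M.IsBase R₂) (hB₂ : M.IsBase B₂) (hd₂ : Disjoint R₂ B₂)
    (hcompat : R₁ ∪ B₁ = R₂ ∪ B₂)
    (hR₁t₁ : (R₁ ∩ H i₁).ncard = k i₁) (hR₁t₃ : (R₁ ∩ H i₃).ncard = k i₃)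
    (hR₂t₁ : (R₂ ∩ H i₁).ncard = k i₁) (hR₂t₃ : (R₂ ∩ H i₃).ncard = k i₃)
    (hB₁t₂ : (B₁ ∩ H i₂).ncard = k i₂) (hB₁t₄ : (B₁ ∩ H i₄).ncard = k i₄)
    (hB₂t₂ : (B₂ ∩ H i₂).ncard = k i₂) (hB₂t₄ : (B₂ ∩ H i₄).ncard = k i₄)
    (hsub : (R₁ ∩ B₂) ∪ (B₁ ∩ R₂) ⊆ (H i₁ ∆ H i₃) ∩ (H i₂ ∆ H i₄))
    (hpos : (B₁ ∩ R₂ ∩ H i₂ ∩ H i₃).Nonempty) :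
    2 ≤ (((R₁ ∩ R₂) ∪ (B₁ ∩ B₂)) \ (H i₁ ∆ H i₃)).ncard := by
  obtain ⟨h12, h13, h14, h23, h24, h34⟩ := hdist
  have hE : M.E.Finite := M.ground_finite
  -- base sizes
  have zR₁ : R₁.ncard = r := base_ncard_aux M r q H k hHE hrE hsplit hcover hindep hR₁
  have zB₁ : B₁.ncard = r := base_ncard_aux M r q H k hHE hrE hsplit hcover hindep hB₁
  have zR₂ : R₂.ncard = r := base_ncard_aux M r q H k hHE hrE hsplit hcover hindep hR₂
  have zB₂ : B₂.ncard = r := base_ncard_aux M r q H k hHE hrE hsplit hcover hindep hB₂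
  -- finiteness
  have fR₁ : R₁.Finite := hE.subset hR₁.subset_ground
  have fB₁ : B₁.Finite := hE.subset hB₁.subset_ground
  have fR₂ : R₂.Finite := hE.subset hR₂.subset_ground
  have fB₂ : B₂.Finite := hE.subset hB₂.subset_ground
  have fH1 : (H i₁).Finite := hE.subset (hHE i₁)
  have fH2 : (H i₂).Finite := hE.subset (hHE i₂)
  have fH3 : (H i₃).Finite := hE.subset (hHE i₃)
  have fH4 : (H i₄).Finite := hE.subset (hHE i₄)
  -- tight pairs
  have tpR₁ := tight_pair_aux fR₁ (fH1.inter_of_left _) zR₁ hR₁t₁ hR₁t₃ (hsplit i₁ i₃ h13)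
  have tpR₂ := tight_pair_aux fR₂ (fH1.inter_of_left _) zR₂ hR₂t₁ hR₂t₃ (hsplit i₁ i₃ h13)
  have tpB₁ := tight_pair_aux fB₁ (fH2.inter_of_left _) zB₁ hB₁t₂ hB₁t₄ (hsplit i₂ i₄ h24)
  have tpB₂ := tight_pair_aux fB₂ (fH2.inter_of_left _) zB₂ hB₂t₂ hB₂t₄ (hsplit i₂ i₄ h24)
  -- split inequalities to be used (instantiated now so `set` rewrites them)
  have hs14 := hsplit i₁ i₄ h14
  have hs23 := hsplit i₂ i₃ h23
  -- abbreviations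
  set H1 := H i₁ with hH1
  set H2 := H i₂ with hH2
  set H3 := H i₃ with hH3
  set H4 := H i₄ with hH4
  set D := R₁ ∩ R₂ with hD
  set C := B₁ ∩ B₂ with hC
  set X := B₁ ∩ R₂ with hX
  set Y := R₁ ∩ B₂ with hY
  have fD : D.Finite := fR₁.inter_of_left _
  have fC : C.Finite := fB₁.inter_of_left _
  have fX : X.Finite := fB₁.inter_of_left _
  have fY : Y.Finite := fR₁.inter_of_left _
  -- pointwise consequences
  have hcomp : ∀ x, (x ∈ R₁ ∨ x ∈ B₁) ↔ (x ∈ R₂ ∨ x ∈ B₂) := by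
    intro x
    have h := Set.ext_iff.mp hcompat x
    simpa only [mem_union] using h
  have pDC : ∀ x, x ∈ D → x ∈ C → False := fun x hx hy => (disjoint_left.mp hd₁) hx.1 hy.1
  have pDX : ∀ x, x ∈ D → x ∈ X → False := fun x hx hy => (disjoint_left.mp hd₁) hx.1 hy.1
  have pDY : ∀ x, x ∈ D → x ∈ Y → False := fun x hx hy => (disjoint_left.mp hd₂) hx.2 hy.2
  have pCX : ∀ x, x ∈ C → x ∈ X → False := fun x hx hy => (disjoint_left.mp hd₂) hy.2 hx.2
  have pCY : ∀ x, x ∈ C → x ∈ Y → False := fun x hx hy => (disjoint_left.mp hd₁) hy.1 hx.1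
  have pXY : ∀ x, x ∈ X → x ∈ Y → False := fun x hx hy => (disjoint_left.mp hd₁) hy.1 hx.1
  have hXmem : ∀ x, x ∈ X →
      ((x ∈ H1 ∧ x ∉ H3) ∨ (x ∈ H3 ∧ x ∉ H1)) ∧ ((x ∈ H2 ∧ x ∉ H4) ∨ (x ∈ H4 ∧ x ∉ H2)) := by
    intro x hx
    have h := hsub (mem_union_right _ hx)
    rw [mem_inter_iff, mem_symmDiff, mem_symmDiff] at h
    exact h
  have hYmem : ∀ x, x ∈ Y →
      ((x ∈ H1 ∧ x ∉ H3) ∨ (x ∈ H3 ∧ x ∉ H1)) ∧ ((x ∈ H2 ∧ x ∉ H4) ∨ (x ∈ H4 ∧ x ∉ H2)) := by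
    intro x hx
    have h := hsub (mem_union_left _ hx)
    rw [mem_inter_iff, mem_symmDiff, mem_symmDiff] at h
    exact h
  have hDU : ∀ x, x ∈ D → x ∈ H1 ∨ x ∈ H3 := fun x hx => tpR₁.2 hx.1
  have hXU : ∀ x, x ∈ X → x ∈ H1 ∨ x ∈ H3 := fun x hx => tpR₂.2 hx.2
  have hYU : ∀ x, x ∈ Y → x ∈ H1 ∨ x ∈ H3 := fun x hx => tpR₁.2 hx.1
  have hCU : ∀ x, x ∈ C → x ∈ H2 ∨ x ∈ H4 := fun x hx => tpB₁.2 hx.1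
  have hXU' : ∀ x, x ∈ X → x ∈ H2 ∨ x ∈ H4 := fun x hx => tpB₁.2 hx.1
  have hYU' : ∀ x, x ∈ Y → x ∈ H2 ∨ x ∈ H4 := fun x hx => tpB₂.2 hx.2
  have hX13 : ∀ x, x ∈ X → x ∈ H1 → x ∈ H3 → False := by
    intro x hx h1 h3; rcases (hXmem x hx).1 with ⟨_, h⟩ | ⟨_, h⟩ <;> exact h (by assumption)
  have hX24 : ∀ x, x ∈ X → x ∈ H2 → x ∈ H4 → False := by
    intro x hx h2 h4; rcases (hXmem x hx).2 with ⟨_, h⟩ | ⟨_, h⟩ <;> exact h (by assumption)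
  have hY13 : ∀ x, x ∈ Y → x ∈ H1 → x ∈ H3 → False := by
    intro x hx h1 h3; rcases (hYmem x hx).1 with ⟨_, h⟩ | ⟨_, h⟩ <;> exact h (by assumption)
  have hY24 : ∀ x, x ∈ Y → x ∈ H2 → x ∈ H4 → False := by
    intro x hx h2 h4; rcases (hYmem x hx).2 with ⟨_, h⟩ | ⟨_, h⟩ <;> exact h (by assumption)
  have h13D : ∀ x, x ∈ H1 → x ∈ H3 → x ∈ D := fun x h1 h3 =>
    ⟨tpR₁.1 ⟨h1, h3⟩, tpR₂.1 ⟨h1, h3⟩⟩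
  -- decompositions of the ground sets
  have eR₂ : R₂ = D ∪ X := by
    ext x
    have h1 := (hcomp x).1
    have h2 := (hcomp x).2
    simp only [hD, hX, mem_union, mem_inter_iff]
    tauto
  have eR₁ : R₁ = D ∪ Y := by
    ext x
    have h1 := (hcomp x).1
    have h2 := (hcomp x).2
    simp only [hD, hY, mem_union, mem_inter_iff]
    tauto
  have eB₁ : B₁ = C ∪ X := by
    ext x
    have h1 := (hcomp x).1
    have h2 := (hcomp x).2
    simp only [hC, hX, mem_union, mem_inter_iff]
    tauto
  have eB₂ : B₂ = C ∪ Y := by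
    ext x
    have h1 := (hcomp x).1
    have h2 := (hcomp x).2
    simp only [hC, hY, mem_union, mem_inter_iff]
    tauto
  -- basic cardinality identities
  have n1 : R₂.ncard = D.ncard + X.ncard := by
    rw [eR₂]
    exact ncard_union_eq (disjoint_left.mpr (fun x hx hy => pDX x hx hy)) fD fX
  have n2 : B₂.ncard = C.ncard + Y.ncard := by
    rw [eB₂]
    exact ncard_union_eq (disjoint_left.mpr (fun x hx hy => pCY x hx hy)) fC fY
  have n3 : D.ncard = (D ∩ H1).ncard + ((D ∩ H3) \ H1).ncard := by
    conv_lhs => rw [show D = (D ∩ H1) ∪ ((D ∩ H3) \ H1) by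
      ext x
      have h := hDU x
      simp only [mem_union, mem_inter_iff, mem_diff]
      by_cases hx1 : x ∈ H1 <;> tauto]
    exact ncard_union_eq (disjoint_left.mpr (fun x hx hy => hy.2 hx.2))
      (fD.inter_of_left _) ((fD.inter_of_left _).diff)
  have n4 : X.ncard = (X ∩ H1).ncard + (X ∩ H3).ncard := by
    conv_lhs => rw [show X = (X ∩ H1) ∪ (X ∩ H3) by
      ext x
      have h := hXU x
      simp only [mem_union, mem_inter_iff]
      tauto]
    exact ncard_union_eq (disjoint_left.mpr (fun x hx hy => hX13 x hx.1 hx.2 hy.2))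
      (fX.inter_of_left _) (fX.inter_of_left _)
  have n5 : (X ∩ H1).ncard = (X ∩ H1 ∩ H2).ncard + (X ∩ H1 ∩ H4).ncard := by
    conv_lhs => rw [show X ∩ H1 = (X ∩ H1 ∩ H2) ∪ (X ∩ H1 ∩ H4) by
      ext x
      have h := hXU' x
      simp only [mem_union, mem_inter_iff]
      tauto]
    exact ncard_union_eq (disjoint_left.mpr (fun x hx hy => hX24 x hx.1.1 hx.2 hy.2))
      ((fX.inter_of_left _).inter_of_left _) ((fX.inter_of_left _).inter_of_left _)
  have n6 : (X ∩ H3).ncard = (X ∩ H2 ∩ H3).ncard + (X ∩ H3 ∩ H4).ncard := by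
    conv_lhs => rw [show X ∩ H3 = (X ∩ H2 ∩ H3) ∪ (X ∩ H3 ∩ H4) by
      ext x
      have h := hXU' x
      simp only [mem_union, mem_inter_iff]
      tauto]
    exact ncard_union_eq (disjoint_left.mpr (fun x hx hy => hX24 x hx.1.1 hx.1.2 hy.2))
      ((fX.inter_of_left _).inter_of_left _) ((fX.inter_of_left _).inter_of_left _)
  have n7a : (R₂ ∩ H1).ncard = (D ∩ H1).ncard + (X ∩ H1).ncard := by
    rw [eR₂, union_inter_distrib_right]
    exact ncard_union_eq (disjoint_left.mpr (fun x hx hy => pDX x hx.1 hy.1))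
      (fD.inter_of_left _) (fX.inter_of_left _)
  have n7b : (R₁ ∩ H1).ncard = (D ∩ H1).ncard + (Y ∩ H1).ncard := by
    rw [eR₁, union_inter_distrib_right]
    exact ncard_union_eq (disjoint_left.mpr (fun x hx hy => pDY x hx.1 hy.1))
      (fD.inter_of_left _) (fY.inter_of_left _)
  have n7c : (Y ∩ H1).ncard = (Y ∩ H1 ∩ H2).ncard + (Y ∩ H1 ∩ H4).ncard := by
    conv_lhs => rw [show Y ∩ H1 = (Y ∩ H1 ∩ H2) ∪ (Y ∩ H1 ∩ H4) by
      ext x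
      have h := hYU' x
      simp only [mem_union, mem_inter_iff]
      tauto]
    exact ncard_union_eq (disjoint_left.mpr (fun x hx hy => hY24 x hx.1.1 hx.2 hy.2))
      ((fY.inter_of_left _).inter_of_left _) ((fY.inter_of_left _).inter_of_left _)
  have n8 : C.ncard = (C ∩ H2).ncard + ((C ∩ H4) \ H2).ncard := by
    conv_lhs => rw [show C = (C ∩ H2) ∪ ((C ∩ H4) \ H2) by
      ext x
      have h := hCU x
      simp only [mem_union, mem_inter_iff, mem_diff]
      by_cases hx2 : x ∈ H2 <;> tauto]
    exact ncard_union_eq (disjoint_left.mpr (fun x hx hy => hy.2 hx.2))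
      (fC.inter_of_left _) ((fC.inter_of_left _).diff)
  have n9 : Y.ncard = (Y ∩ H2).ncard + (Y ∩ H4).ncard := by
    conv_lhs => rw [show Y = (Y ∩ H2) ∪ (Y ∩ H4) by
      ext x
      have h := hYU' x
      simp only [mem_union, mem_inter_iff]
      tauto]
    exact ncard_union_eq (disjoint_left.mpr (fun x hx hy => hY24 x hx.1 hx.2 hy.2))
      (fY.inter_of_left _) (fY.inter_of_left _)
  have n10 : (Y ∩ H2).ncard = (Y ∩ H1 ∩ H2).ncard + (Y ∩ H2 ∩ H3).ncard := by
    conv_lhs => rw [show Y ∩ H2 = (Y ∩ H1 ∩ H2) ∪ (Y ∩ H2 ∩ H3) by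
      ext x
      have h := hYU x
      simp only [mem_union, mem_inter_iff]
      tauto]
    exact ncard_union_eq (disjoint_left.mpr (fun x hx hy => hY13 x hx.1.1 hx.1.2 hy.2))
      ((fY.inter_of_left _).inter_of_left _) ((fY.inter_of_left _).inter_of_left _)
  have n11 : (Y ∩ H4).ncard = (Y ∩ H1 ∩ H4).ncard + (Y ∩ H3 ∩ H4).ncard := by
    conv_lhs => rw [show Y ∩ H4 = (Y ∩ H1 ∩ H4) ∪ (Y ∩ H3 ∩ H4) by
      ext x
      have h := hYU x
      simp only [mem_union, mem_inter_iff]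
      tauto]
    exact ncard_union_eq (disjoint_left.mpr (fun x hx hy => hY13 x hx.1.1 hx.1.2 hy.1.2))
      ((fY.inter_of_left _).inter_of_left _) ((fY.inter_of_left _).inter_of_left _)
  have n12a : (R₂ ∩ H3).ncard = (D ∩ H3).ncard + (X ∩ H3).ncard := by
    rw [eR₂, union_inter_distrib_right]
    exact ncard_union_eq (disjoint_left.mpr (fun x hx hy => pDX x hx.1 hy.1))
      (fD.inter_of_left _) (fX.inter_of_left _)
  have n12b : (D ∩ H3).ncard = ((D ∩ H3) \ H1).ncard + (H1 ∩ H3).ncard := by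
    conv_lhs => rw [show D ∩ H3 = ((D ∩ H3) \ H1) ∪ (H1 ∩ H3) by
      ext x
      have h := h13D x
      simp only [mem_union, mem_inter_iff, mem_diff]
      by_cases hx1 : x ∈ H1 <;> tauto]
    exact ncard_union_eq (disjoint_left.mpr (fun x hx hy => hx.2 hy.1))
      ((fD.inter_of_left _).diff) (fH1.inter_of_left _)
  have n13 : (B₁ ∩ H2).ncard = (C ∩ H2).ncard + (X ∩ H2).ncard := by
    rw [eB₁, union_inter_distrib_right]
    exact ncard_union_eq (disjoint_left.mpr (fun x hx hy => pCX x hx.1 hy.1))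
      (fC.inter_of_left _) (fX.inter_of_left _)
  have n13b : (X ∩ H2).ncard = (X ∩ H1 ∩ H2).ncard + (X ∩ H2 ∩ H3).ncard := by
    conv_lhs => rw [show X ∩ H2 = (X ∩ H1 ∩ H2) ∪ (X ∩ H2 ∩ H3) by
      ext x
      have h := hXU x
      simp only [mem_union, mem_inter_iff]
      tauto]
    exact ncard_union_eq (disjoint_left.mpr (fun x hx hy => hX13 x hx.1.1 hx.1.2 hy.2))
      ((fX.inter_of_left _).inter_of_left _) ((fX.inter_of_left _).inter_of_left _)
  have n14 : (B₂ ∩ H2).ncard = (C ∩ H2).ncard + (Y ∩ H2).ncard := by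
    rw [eB₂, union_inter_distrib_right]
    exact ncard_union_eq (disjoint_left.mpr (fun x hx hy => pCY x hx.1 hy.1))
      (fC.inter_of_left _) (fY.inter_of_left _)
  have n15 : (B₂ ∩ H4).ncard = (C ∩ H4).ncard + (Y ∩ H4).ncard := by
    rw [eB₂, union_inter_distrib_right]
    exact ncard_union_eq (disjoint_left.mpr (fun x hx hy => pCY x hx.1 hy.1))
      (fC.inter_of_left _) (fY.inter_of_left _)
  have n15b : (C ∩ H4).ncard = (C ∩ H1 ∩ H4).ncard + ((C ∩ H4) \ H1).ncard := by
    conv_lhs => rw [show C ∩ H4 = (C ∩ H1 ∩ H4) ∪ ((C ∩ H4) \ H1) by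
      ext x
      simp only [mem_union, mem_inter_iff, mem_diff]
      by_cases hx1 : x ∈ H1 <;> tauto]
    exact ncard_union_eq (disjoint_left.mpr (fun x hx hy => hy.2 hx.1.2))
      ((fC.inter_of_left _).inter_of_left _) ((fC.inter_of_left _).diff)
  -- the two split inequalities, restricted to the ground set pieces
  have n16 : (D ∩ H1 ∩ H4).ncard + (C ∩ H1 ∩ H4).ncard + (X ∩ H1 ∩ H4).ncard
      + (Y ∩ H1 ∩ H4).ncard + r ≤ k i₁ + k i₄ := by
    have e1 : ((X ∩ H1 ∩ H4) ∪ (Y ∩ H1 ∩ H4)).ncard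
        = (X ∩ H1 ∩ H4).ncard + (Y ∩ H1 ∩ H4).ncard :=
      ncard_union_eq (disjoint_left.mpr (fun x hx hy => pXY x hx.1.1 hy.1.1))
        ((fX.inter_of_left _).inter_of_left _) ((fY.inter_of_left _).inter_of_left _)
    have e2 : ((C ∩ H1 ∩ H4) ∪ ((X ∩ H1 ∩ H4) ∪ (Y ∩ H1 ∩ H4))).ncard
        = (C ∩ H1 ∩ H4).ncard + ((X ∩ H1 ∩ H4) ∪ (Y ∩ H1 ∩ H4)).ncard :=
      ncard_union_eq
        (disjoint_left.mpr (fun x hx hy => by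
          rcases hy with hy | hy
          · exact pCX x hx.1.1 hy.1.1
          · exact pCY x hx.1.1 hy.1.1))
        ((fC.inter_of_left _).inter_of_left _)
        (((fX.inter_of_left _).inter_of_left _).union ((fY.inter_of_left _).inter_of_left _))
    have e3 : ((D ∩ H1 ∩ H4) ∪ ((C ∩ H1 ∩ H4) ∪ ((X ∩ H1 ∩ H4) ∪ (Y ∩ H1 ∩ H4)))).ncard
        = (D ∩ H1 ∩ H4).ncard + ((C ∩ H1 ∩ H4) ∪ ((X ∩ H1 ∩ H4) ∪ (Y ∩ H1 ∩ H4))).ncard :=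
      ncard_union_eq
        (disjoint_left.mpr (fun x hx hy => by
          rcases hy with hy | hy | hy
          · exact pDC x hx.1.1 hy.1.1
          · exact pDX x hx.1.1 hy.1.1
          · exact pDY x hx.1.1 hy.1.1))
        ((fD.inter_of_left _).inter_of_left _)
        (((fC.inter_of_left _).inter_of_left _).union
          (((fX.inter_of_left _).inter_of_left _).union ((fY.inter_of_left _).inter_of_left _)))
    have hle : ((D ∩ H1 ∩ H4) ∪ ((C ∩ H1 ∩ H4) ∪ ((X ∩ H1 ∩ H4) ∪ (Y ∩ H1 ∩ H4)))).ncard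
        ≤ (H1 ∩ H4).ncard := by
      refine ncard_le_ncard ?_ (fH1.inter_of_left _)
      intro x hx
      rcases hx with hx | hx | hx | hx <;> exact ⟨hx.1.2, hx.2⟩
    omega
  have n17 : (D ∩ H2 ∩ H3).ncard + (C ∩ H2 ∩ H3).ncard + (X ∩ H2 ∩ H3).ncard
      + (Y ∩ H2 ∩ H3).ncard + r ≤ k i₂ + k i₃ := by
    have e1 : ((X ∩ H2 ∩ H3) ∪ (Y ∩ H2 ∩ H3)).ncard
        = (X ∩ H2 ∩ H3).ncard + (Y ∩ H2 ∩ H3).ncard :=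
      ncard_union_eq (disjoint_left.mpr (fun x hx hy => pXY x hx.1.1 hy.1.1))
        ((fX.inter_of_left _).inter_of_left _) ((fY.inter_of_left _).inter_of_left _)
    have e2 : ((C ∩ H2 ∩ H3) ∪ ((X ∩ H2 ∩ H3) ∪ (Y ∩ H2 ∩ H3))).ncard
        = (C ∩ H2 ∩ H3).ncard + ((X ∩ H2 ∩ H3) ∪ (Y ∩ H2 ∩ H3)).ncard :=
      ncard_union_eq
        (disjoint_left.mpr (fun x hx hy => by
          rcases hy with hy | hy
          · exact pCX x hx.1.1 hy.1.1
          · exact pCY x hx.1.1 hy.1.1))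
        ((fC.inter_of_left _).inter_of_left _)
        (((fX.inter_of_left _).inter_of_left _).union ((fY.inter_of_left _).inter_of_left _))
    have e3 : ((D ∩ H2 ∩ H3) ∪ ((C ∩ H2 ∩ H3) ∪ ((X ∩ H2 ∩ H3) ∪ (Y ∩ H2 ∩ H3)))).ncard
        = (D ∩ H2 ∩ H3).ncard + ((C ∩ H2 ∩ H3) ∪ ((X ∩ H2 ∩ H3) ∪ (Y ∩ H2 ∩ H3))).ncard :=
      ncard_union_eq
        (disjoint_left.mpr (fun x hx hy => by
          rcases hy with hy | hy | hy
          · exact pDC x hx.1.1 hy.1.1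
          · exact pDX x hx.1.1 hy.1.1
          · exact pDY x hx.1.1 hy.1.1))
        ((fD.inter_of_left _).inter_of_left _)
        (((fC.inter_of_left _).inter_of_left _).union
          (((fX.inter_of_left _).inter_of_left _).union ((fY.inter_of_left _).inter_of_left _)))
    have hle : ((D ∩ H2 ∩ H3) ∪ ((C ∩ H2 ∩ H3) ∪ ((X ∩ H2 ∩ H3) ∪ (Y ∩ H2 ∩ H3)))).ncard
        ≤ (H2 ∩ H3).ncard := by
      refine ncard_le_ncard ?_ (fH2.inter_of_left _)
      intro x hx
      rcases hx with hx | hx | hx | hx <;> exact ⟨hx.1.2, hx.2⟩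
    omega
  -- bounding |C ∩ H4 \ H1|
  have n18 : ((C ∩ H4) \ H1).ncard ≤ (C ∩ H2 ∩ H3).ncard
      + ((C ∩ H2 ∩ H4) \ (H1 ∪ H3)).ncard + ((C ∩ H4) \ H2).ncard := by
    have hsub' : (C ∩ H4) \ H1 ⊆
        (C ∩ H2 ∩ H3) ∪ (((C ∩ H2 ∩ H4) \ (H1 ∪ H3)) ∪ ((C ∩ H4) \ H2)) := by
      intro x
      simp only [mem_union, mem_inter_iff, mem_diff]
      tauto
    calc ((C ∩ H4) \ H1).ncard
        ≤ ((C ∩ H2 ∩ H3) ∪ (((C ∩ H2 ∩ H4) \ (H1 ∪ H3)) ∪ ((C ∩ H4) \ H2))).ncard := by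
          refine ncard_le_ncard hsub' ?_
          exact ((fC.inter_of_left _).inter_of_left _).union
            ((((fC.inter_of_left _).inter_of_left _).diff).union ((fC.inter_of_left _).diff))
      _ ≤ (C ∩ H2 ∩ H3).ncard
          + (((C ∩ H2 ∩ H4) \ (H1 ∪ H3)) ∪ ((C ∩ H4) \ H2)).ncard := ncard_union_le _ _
      _ ≤ (C ∩ H2 ∩ H3).ncard + (((C ∩ H2 ∩ H4) \ (H1 ∪ H3)).ncard
          + ((C ∩ H4) \ H2).ncard) := by
          have := ncard_union_le ((C ∩ H2 ∩ H4) \ (H1 ∪ H3)) ((C ∩ H4) \ H2)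
          omega
      _ = (C ∩ H2 ∩ H3).ncard + ((C ∩ H2 ∩ H4) \ (H1 ∪ H3)).ncard
          + ((C ∩ H4) \ H2).ncard := by ring
  -- the witness element
  have n19 : 1 ≤ (X ∩ H2 ∩ H3).ncard :=
    (ncard_pos ((fX.inter_of_left _).inter_of_left _)).mpr hpos
  -- lower bound on the goal
  have n20 : (H1 ∩ H3).ncard + ((C ∩ H2 ∩ H4) \ (H1 ∪ H3)).ncard
      ≤ ((D ∪ C) \ (H1 ∆ H3)).ncard := by
    have hdisj : Disjoint (H1 ∩ H3) ((C ∩ H2 ∩ H4) \ (H1 ∪ H3)) :=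
      disjoint_left.mpr (fun x hx hy => hy.2 (Or.inl hx.1))
    have hsubG : (H1 ∩ H3) ∪ ((C ∩ H2 ∩ H4) \ (H1 ∪ H3)) ⊆ (D ∪ C) \ (H1 ∆ H3) := by
      intro x hx
      rcases hx with hx | hx
      · refine ⟨Or.inl (h13D x hx.1 hx.2), ?_⟩
        rw [mem_symmDiff]
        rintro (⟨_, h⟩ | ⟨_, h⟩)
        · exact h hx.2
        · exact h hx.1
      · refine ⟨Or.inr hx.1.1.1, ?_⟩
        rw [mem_symmDiff]
        rintro (⟨h, _⟩ | ⟨h, _⟩)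
        · exact hx.2 (Or.inl h)
        · exact hx.2 (Or.inr h)
    calc (H1 ∩ H3).ncard + ((C ∩ H2 ∩ H4) \ (H1 ∪ H3)).ncard
        = ((H1 ∩ H3) ∪ ((C ∩ H2 ∩ H4) \ (H1 ∪ H3))).ncard :=
          (ncard_union_eq hdisj (fH1.inter_of_left _)
            (((fC.inter_of_left _).inter_of_left _).diff)).symm
      _ ≤ ((D ∪ C) \ (H1 ∆ H3)).ncard :=
          ncard_le_ncard hsubG ((fD.union fC).diff)
  omega
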